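/- Let G be a finite nilpotent CCS group. Then G is a non-abelian p-group for some prime p. -/

import Mathlib

open Monoid

lemma myFinsetLcm {ι : Type*} (f : ι → ℕ) (s : Finset ι)
    (h : (s : Set ι).Pairwise fun i j => Nat.Coprime (f i) (f j)) :
    s.lcm f = ∏ i ∈ s, f i := by
  classical
  induction s using Finset.induction with
  | empty => simp
  | @insert a s hx ih =>
    rw [Finset.lcm_insert, Finset.prod_insert hx,
      ih (h.mono (by simp [Finset.subset_insert]))]
    have hco : Nat.Coprime (f a) (∏ i ∈ s, f i) :=
      Nat.Coprime.prod_right fun i hi =>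
        h (by simp) (by simp [hi]) (by rintro rfl; exact hx hi)
    rw [lcm_eq_nat_lcm, Nat.Coprime.lcm_eq_mul hco]

lemma myIsCyclicPi {ι : Type*} [Fintype ι] (H : ι → Type*) [∀ i, Group (H i)]
    [∀ i, Finite (H i)] [∀ i, IsCyclic (H i)]
    (hco : Pairwise fun i j => Nat.Coprime (Nat.card (H i)) (Nat.card (H j))) :
    IsCyclic (∀ i, H i) := by
  letI : ∀ i, CommGroup (H i) := fun i => IsCyclic.commGroup
  apply IsCyclic.of_exponent_eq_card
  rw [Monoid.exponent_pi, Nat.card_pi]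
  have he : ∀ i, exponent (H i) = Nat.card (H i) := fun i => IsCyclic.exponent_eq_card
  simp_rw [he]
  exact myFinsetLcm _ _ (fun i _ j _ hij => hco hij)


lemma myElementary {G : Type*} [CommGroup G] [Finite G] {p : ℕ} (hp : p.Prime)
    (hG : ∀ g : G, g ^ p = 1) {N : Subgroup G} (hchar : N.Characteristic)
    (hbot : N ≠ ⊥) (htop : N ≠ ⊤) : False := by
  letI := Fact.mk hp
  haveI : NeZero p := ⟨hp.ne_zero⟩
  have h0 : ∀ x : Additive G, p • x = 0 := fun x => congrArg Additive.ofMul (hG _)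
  haveI : Module (ZMod p) (Additive G) := AddCommMonoid.zmodModule h0
  -- pick x in N nontrivial and y outside
  obtain ⟨x, hxN, hx1⟩ : ∃ x ∈ N, x ≠ 1 := by
    by_contra h
    push_neg at h
    exact hbot (Subgroup.eq_bot_iff_forall N |>.mpr h)
  obtain ⟨y, hyN⟩ : ∃ y, y ∉ N := by
    by_contra h
    push_neg at h
    exact htop (Subgroup.eq_top_iff' N |>.mpr h)
  have hy1 : y ≠ 1 := fun h => hyN (h ▸ N.one_mem)
  -- view as vectors
  have hx0 : (Additive.ofMul x : Additive G) ≠ 0 := fun h => hx1 (congrArg Additive.toMul h)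
  have hy0 : (Additive.ofMul y : Additive G) ≠ 0 := fun h => hy1 (congrArg Additive.toMul h)
  haveI : NoZeroSMulDivisors (ZMod p) (Additive G) := by
    constructor
    intro c z h
    by_contra hc
    push_neg at hc
    exact hc.2 (by rw [← one_smul (ZMod p) z, ← inv_mul_cancel₀ hc.1, mul_smul, h, smul_zero])
  have h1 := (LinearIndepOn.singleton (R := ZMod p) (v := (id : Additive G → Additive G)) hx0 :
    LinearIndepOn (ZMod p) id {(Additive.ofMul x : Additive G)})
  have h2 := (LinearIndepOn.singleton (R := ZMod p) (v := (id : Additive G → Additive G)) hy0 :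
    LinearIndepOn (ZMod p) id {(Additive.ofMul y : Additive G)})
  let b₁ := Module.Basis.extend h1
  let b₂ := Module.Basis.extend h2
  have hxB : (Additive.ofMul x : Additive G) ∈ h1.extend (Set.subset_univ _) :=
    h1.subset_extend _ rfl
  have hyB : (Additive.ofMul y : Additive G) ∈ h2.extend (Set.subset_univ _) :=
    h2.subset_extend _ rfl
  classical
  let e0 := b₁.indexEquiv b₂
  let e' := e0.trans (Equiv.swap (e0 ⟨_, hxB⟩) ⟨_, hyB⟩)
  let f : Additive G ≃ₗ[ZMod p] Additive G := b₁.equiv b₂ e'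
  have hfx : f (Additive.ofMul x) = Additive.ofMul y := by
    have h1' : b₁ ⟨_, hxB⟩ = Additive.ofMul x := Module.Basis.extend_apply_self _ _
    have h2' : b₂ ⟨_, hyB⟩ = Additive.ofMul y := Module.Basis.extend_apply_self _ _
    rw [← h1', Module.Basis.equiv_apply, show e' ⟨_, hxB⟩ = ⟨_, hyB⟩ from ?_, h2']
    show Equiv.swap (e0 ⟨_, hxB⟩) ⟨_, hyB⟩ (e0 ⟨_, hxB⟩) = _
    exact Equiv.swap_apply_left _ _
  let φ : G ≃* G := MulEquiv.toAdditive.symm f.toAddEquiv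
  have hmap := (Subgroup.characteristic_iff_map_eq.mp hchar) φ
  have : y ∈ N := by
    rw [← hmap]
    exact ⟨x, hxN, hfx⟩
  exact hyN this

/-- A finite group is a `CCS` group if it is not cyclic, it has a nontrivial proper
characteristic subgroup, and every proper characteristic subgroup is cyclic. -/
def IsCCS (G : Type*) [Group G] : Prop :=
  ¬ IsCyclic G ∧
  (∃ N : Subgroup G, N.Characteristic ∧ N ≠ ⊥ ∧ N ≠ ⊤) ∧
  ∀ N : Subgroup G, N.Characteristic → N ≠ ⊤ → IsCyclic N

/-- A finite nilpotent CCS group is a non-abelian `p`-group for some prime `p`. -/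
theorem nilpotent_CCS_is_nonabelian_pGroup
    (G : Type*) [Group G] [Finite G] (hnil : Group.IsNilpotent G) (hccs : IsCCS G) :
    (∃ p : ℕ, p.Prime ∧ IsPGroup p G) ∧ ∃ a b : G, a * b ≠ b * a := by
  obtain ⟨hnc, ⟨N₀, hN₀char, hN₀bot, hN₀top⟩, hcyc⟩ := hccs
  have hSylNorm : ∀ (p : ℕ) (_ : Fact p.Prime) (P : Sylow p G), (↑P : Subgroup G).Normal :=
    ((isNilpotent_of_finite_tfae (G := G)).out 0 3).mp hnil
  have hcard0 : Nat.card G ≠ 0 := Nat.card_pos.ne'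
  have hcard1 : Nat.card G ≠ 1 := by
    intro h
    exact hnc (@isCyclic_of_subsingleton _ _ (Nat.card_eq_one_iff_unique.mp h).1)
  have key : ∀ q r : ℕ, q.Prime → r.Prime → q ∣ Nat.card G → r ∣ Nat.card G → q = r := by
    intro q r hq hr hqd hrd
    by_contra hqr
    have hproper : ∀ (s : ℕ) (hs : Fact s.Prime) (P : Sylow s G), (↑P : Subgroup G) ≠ ⊤ := by
      intro s hs P htop
      have hPG : IsPGroup s G := by
        intro g
        obtain ⟨k, hk⟩ := P.isPGroup' ⟨g, htop ▸ Subgroup.mem_top g⟩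
        exact ⟨k, by simpa [Subtype.ext_iff] using hk⟩
      obtain ⟨n, hn⟩ := IsPGroup.iff_card.mp hPG
      rw [hn] at hqd hrd
      rw [(Nat.prime_dvd_prime_iff_eq hq hs.out).mp (hq.dvd_of_dvd_pow hqd)] at hqr
      rw [(Nat.prime_dvd_prime_iff_eq hr hs.out).mp (hr.dvd_of_dvd_pow hrd)] at hqr
      exact hqr rfl
    set ps := (Nat.card G).primeFactors with hps
    haveI hfact : ∀ p : ps, Fact (Nat.Prime (p : ℕ)) :=
      fun p => ⟨Nat.prime_of_mem_primeFactors p.2⟩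
    have e := Sylow.directProductOfNormal (G := G) (fun {p hp} P => hSylNorm p hp P)
    haveI hcyclic : ∀ p : ps, ∀ P : Sylow (p : ℕ) G, IsCyclic ↥(P : Subgroup G) := by
      intro p P
      haveI := Sylow.characteristic_of_normal P (hSylNorm p (hfact p) P)
      exact hcyc _ inferInstance (hproper p (hfact p) P)
    haveI huniq : ∀ p : ps, Unique (Sylow (p : ℕ) G) :=
      fun p => Sylow.unique_of_normal default (hSylNorm p (hfact p) default)
    haveI : ∀ p : ps, IsCyclic (∀ P : Sylow (p : ℕ) G, ↥(P : Subgroup G)) := by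
      intro p
      exact isCyclic_of_surjective (MulEquiv.piUnique
        (fun P : Sylow (p : ℕ) G => ↥(P : Subgroup G))).symm (MulEquiv.surjective _)
    have hcards : ∀ p : ps, Nat.card (∀ P : Sylow (p : ℕ) G, ↥(P : Subgroup G)) =
        (p : ℕ) ^ (Nat.card G).factorization p := by
      intro p
      rw [Nat.card_congr (Equiv.piUnique (fun P : Sylow (p : ℕ) G => ↥(P : Subgroup G)))]
      exact Sylow.card_eq_multiplicity _
    haveI : IsCyclic (∀ p : ps, ∀ P : Sylow (p : ℕ) G, ↥(P : Subgroup G)) := by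
      apply myIsCyclicPi
      intro p q hpq
      rw [hcards p, hcards q]
      exact ((Nat.coprime_primes (hfact p).out (hfact q).out).mpr
        (fun h => hpq (Subtype.ext h))).pow _ _
    exact hnc (isCyclic_of_surjective e e.surjective)
  obtain ⟨p, hp, hpd⟩ := Nat.exists_prime_and_dvd hcard1
  have hcard : Nat.card G = p ^ (Nat.card G).primeFactorsList.length :=
    Nat.eq_prime_pow_of_unique_prime_dvd hcard0 (fun {d} hd hdd => key d p hd hp hdd hpd)
  have hPG : IsPGroup p G := IsPGroup.of_card hcard
  refine ⟨⟨p, hp, hPG⟩, ?_⟩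
  by_contra hab
  push_neg at hab
  letI cG : CommGroup G := { ‹Group G› with mul_comm := fun a b => hab a b }
  haveI hfp := Fact.mk hp
  -- the subgroup of elements of order dividing p
  let Ω : Subgroup G :=
    { carrier := {g : G | g ^ p = 1}
      one_mem' := one_pow p
      mul_mem' := fun {a b} ha hb => by
        simp only [Set.mem_setOf_eq] at *
        rw [mul_pow, ha, hb, one_mul]
      inv_mem' := fun {a} ha => by
        simp only [Set.mem_setOf_eq] at *
        rw [inv_pow, ha, inv_one] }
  have hΩmem : ∀ g : G, g ∈ Ω ↔ g ^ p = 1 := fun g => Iff.rfl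
  have hΩchar : Ω.Characteristic := by
    rw [Subgroup.characteristic_iff_comap_eq]
    intro φ
    ext g
    rw [Subgroup.mem_comap, hΩmem, hΩmem]
    constructor
    · intro h
      apply φ.injective
      rw [map_pow, map_one]
      exact h
    · intro h
      show φ g ^ p = 1
      rw [← map_pow, h, map_one]
  -- structure theorem
  obtain ⟨ι, hι, n, hn1, ⟨e⟩⟩ := CommGroup.equiv_prod_multiplicative_zmod_of_finite G
  haveI : ∀ k, NeZero (n k) := fun k => ⟨by have := hn1 k; omega⟩
  have hcardG : Nat.card G = ∏ k, n k := by
    rw [Nat.card_congr e.toEquiv, Nat.card_pi]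
    congr 1
    ext k
    rw [Nat.card_congr (Multiplicative.toAdd (α := ZMod (n k))), Nat.card_zmod]
  have hndvd : ∀ k, n k ∣ Nat.card G := by
    intro k
    rw [hcardG]
    exact Finset.dvd_prod_of_mem _ (Finset.mem_univ k)
  have hpdvd : ∀ k, p ∣ n k := by
    intro k
    obtain ⟨q, hq, hqd⟩ := Nat.exists_prime_and_dvd (hn1 k).ne'
    have h5 : q ∣ Nat.card G := hqd.trans (hndvd k)
    rw [hcard] at h5
    rwa [(Nat.prime_dvd_prime_iff_eq hq hp).mp (hq.dvd_of_dvd_pow h5)] at hqd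
  -- two distinct indices
  obtain ⟨i, j, hij⟩ : ∃ i j : ι, i ≠ j := by
    by_contra h
    push_neg at h
    haveI : Subsingleton ι := ⟨h⟩
    apply hnc
    rcases isEmpty_or_nonempty ι with hie | hne
    · haveI : Subsingleton (∀ k, Multiplicative (ZMod (n k))) :=
        ⟨fun a b => funext fun k => (hie.false k).elim⟩
      exact isCyclic_of_surjective e.symm e.symm.surjective
    · haveI : Unique ι := uniqueOfSubsingleton hne.some
      haveI : IsCyclic (∀ k, Multiplicative (ZMod (n k))) :=
        isCyclic_of_surjective (MulEquiv.piUnique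
          (fun k => Multiplicative (ZMod (n k)))).symm (MulEquiv.surjective _)
      exact isCyclic_of_surjective e.symm e.symm.surjective
  -- elements of order p in coordinates i and j
  have hcardM : ∀ k, Nat.card (Multiplicative (ZMod (n k))) = n k := by
    intro k
    rw [Nat.card_congr (Multiplicative.toAdd (α := ZMod (n k))), Nat.card_zmod]
  classical
  obtain ⟨a₀, ha₀⟩ : ∃ x : Multiplicative (ZMod (n i)), orderOf x = p :=
    exists_prime_orderOf_dvd_card' p (by rw [hcardM i]; exact hpdvd i)
  obtain ⟨b₀, hb₀⟩ : ∃ x : Multiplicative (ZMod (n j)), orderOf x = p :=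
    exists_prime_orderOf_dvd_card' p (by rw [hcardM j]; exact hpdvd j)
  -- an injection of (ZMod p)² into Ω
  let u : ZMod p → ∀ k, Multiplicative (ZMod (n k)) := fun c => Pi.mulSingle i (a₀ ^ c.val)
  let v : ZMod p → ∀ k, Multiplicative (ZMod (n k)) := fun d => Pi.mulSingle j (b₀ ^ d.val)
  let F : ZMod p × ZMod p → G := fun c => e.symm (u c.1 * v c.2)
  have hFΩ : ∀ c, F c ∈ Ω := by
    intro c
    rw [hΩmem]
    show (e.symm (u c.1 * v c.2)) ^ p = 1
    rw [← map_pow]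
    have ha1 : a₀ ^ p = 1 := ha₀ ▸ pow_orderOf_eq_one a₀
    have hb1 : b₀ ^ p = 1 := hb₀ ▸ pow_orderOf_eq_one b₀
    have hx : (a₀ ^ (c.1.val)) ^ p = 1 := by
      rw [← pow_mul, mul_comm, pow_mul, ha1, one_pow]
    have hy : (b₀ ^ (c.2.val)) ^ p = 1 := by
      rw [← pow_mul, mul_comm, pow_mul, hb1, one_pow]
    have h6 : (u c.1 * v c.2) ^ p = 1 := by
      show (Pi.mulSingle (M := fun k => Multiplicative (ZMod (n k))) i (a₀ ^ c.1.val) *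
        Pi.mulSingle j (b₀ ^ c.2.val)) ^ p = 1
      rw [mul_pow, ← Pi.mulSingle_pow, ← Pi.mulSingle_pow, hx, hy, Pi.mulSingle_one,
        Pi.mulSingle_one, one_mul]
    rw [h6, map_one]
  have hFinj : Function.Injective F := by
    intro c d h
    have h2 : u c.1 * v c.2 = u d.1 * v d.2 := e.symm.injective h
    have hi' := congrFun h2 i
    have hj' := congrFun h2 j
    simp only [u, v, Pi.mul_apply, Pi.mulSingle_eq_same, Pi.mulSingle_eq_of_ne hij.symm,
      Pi.mulSingle_eq_of_ne hij, mul_one, one_mul] at hi' hj'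
    have hvi : c.1 = d.1 := by
      have h4 := pow_eq_pow_iff_modEq.mp hi'
      rw [ha₀] at h4
      unfold Nat.ModEq at h4
      rw [Nat.mod_eq_of_lt (ZMod.val_lt _), Nat.mod_eq_of_lt (ZMod.val_lt _)] at h4
      exact ZMod.val_injective p h4
    have hvj : c.2 = d.2 := by
      have h4 := pow_eq_pow_iff_modEq.mp hj'
      rw [hb₀] at h4
      unfold Nat.ModEq at h4
      rw [Nat.mod_eq_of_lt (ZMod.val_lt _), Nat.mod_eq_of_lt (ZMod.val_lt _)] at h4
      exact ZMod.val_injective p h4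
    exact Prod.ext hvi hvj
  have hcardΩ : p * p ≤ Nat.card Ω := by
    have hinj : Function.Injective (fun c => (⟨F c, hFΩ c⟩ : Ω)) :=
      fun c d h => hFinj (congrArg Subtype.val h)
    have := Nat.card_le_card_of_injective _ hinj
    rwa [Nat.card_prod, Nat.card_zmod] at this
  -- hence Ω is not a proper subgroup
  have hΩtop : Ω = ⊤ := by
    by_contra h
    have hc := hcyc Ω hΩchar h
    have h1 : Monoid.exponent Ω ∣ p :=
      Monoid.exponent_dvd_of_forall_pow_eq_one (fun x => by
        ext
        push_cast
        exact x.2)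
    have h2 : Nat.card Ω = Monoid.exponent Ω := (@IsCyclic.exponent_eq_card _ _ hc).symm
    have h3 : Nat.card Ω ≤ p := h2 ▸ Nat.le_of_dvd hp.pos h1
    have := hp.two_le
    nlinarith
  have hall : ∀ g : G, g ^ p = 1 := fun g => (hΩmem g).mp (hΩtop ▸ Subgroup.mem_top g)
  exact myElementary hp hall hN₀char hN₀bot hN₀top
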